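/- Let 0 < t ≤ 1 and -1/6 ≤ γ ≤ 1/6, and define cos t_h⁻ via 1 - cos t_h⁻ = t²/(1 + t²/6 + √((1+t²/6)² + 4γt²)). Then cos t_h⁻ - 1 + t²/2 = (1+6γ)t⁴ / (2(6 + t² + 12γ(1 - cos t_h⁻) + 6γt²)), and consequently |cos t_h⁻ - (1 - t²/2 + ((6γ+1)/12) t⁴)| ≤ C t⁶ for a constant C independent of t and γ. -/

import Mathlib

set_option maxHeartbeats 1000000

theorem dispersion_taylor_expansion :
    ∃ C : ℝ, 0 < C ∧ ∀ t γ : ℝ, 0 < t → t ≤ 1 → -1/6 ≤ γ → γ ≤ 1/6 →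
      (fun c : ℝ =>
        (c - 1 + t^2/2 =
          (1 + 6*γ)*t^4 / (2*(6 + t^2 + 12*γ*(1 - c) + 6*γ*t^2))) ∧
        |c - (1 - t^2/2 + ((6*γ + 1)/12)*t^4)| ≤ C*t^6)
      (1 - t^2 / (1 + t^2/6 + Real.sqrt ((1 + t^2/6)^2 + 4*γ*t^2))) := by
  refine ⟨1, one_pos, ?_⟩
  intro t γ ht ht1 hγ1 hγ2
  have ht2 : t^2 ≤ 1 := by nlinarith
  have ht0 : 0 < t^2 := by positivity
  have harg : (0:ℝ) ≤ (1 + t^2/6)^2 + 4*γ*t^2 := by nlinarith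
  set s := Real.sqrt ((1 + t^2/6)^2 + 4*γ*t^2) with hsdef
  have hs0 : 0 ≤ s := Real.sqrt_nonneg _
  have hs2 : s^2 = (1 + t^2/6)^2 + 4*γ*t^2 := Real.sq_sqrt harg
  clear_value s
  set D : ℝ := 1 + t^2/6 + s with hDdef
  have hD1 : 1 ≤ D := by rw [hDdef]; nlinarith
  have hD0 : (0:ℝ) < D := by linarith
  have hDne : D ≠ 0 := ne_of_gt hD0
  have hc : (1 : ℝ) - (1 - t^2 / D) = t^2 / D := by ring
  have hu0 : 0 ≤ t^2 / D := by positivity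
  have hu1 : t^2 / D ≤ t^2 := by
    rw [div_le_iff₀ hD0]; nlinarith
  have hE : 4 ≤ 6 + t^2 + 12*γ*(t^2/D) + 6*γ*t^2 := by nlinarith
  have hEub : 6 + t^2 + 12*γ*(t^2/D) + 6*γ*t^2 ≤ 10 := by nlinarith
  constructor
  · show (1 - t^2/D) - 1 + t^2/2 =
      (1 + 6*γ)*t^4 / (2*(6 + t^2 + 12*γ*(1 - (1 - t^2/D)) + 6*γ*t^2))
    rw [hc]
    have hEne : (2*(6 + t^2 + 12*γ*(t^2/D) + 6*γ*t^2)) ≠ 0 := by positivity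
    rw [eq_div_iff hEne]
    rw [hDdef]
    field_simp
    linear_combination 216*t^2*hs2
  · show |(1 - t^2/D) - (1 - t^2/2 + ((6*γ + 1)/12)*t^4)| ≤ 1*t^6
    have hEne : (2*(6 + t^2 + 12*γ*(t^2/D) + 6*γ*t^2)) ≠ 0 := by positivity
    have h₁ : (1 - t^2/D) - 1 + t^2/2 =
        (1 + 6*γ)*t^4 / (2*(6 + t^2 + 12*γ*(t^2/D) + 6*γ*t^2)) := by
      rw [eq_div_iff hEne]
      rw [hDdef]
      field_simp
      linear_combination 216*t^2*hs2
    have hx : (1 - t^2/D) - (1 - t^2/2 + ((6*γ + 1)/12)*t^4)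
        = (1 + 6*γ)*t^4 / (2*(6 + t^2 + 12*γ*(t^2/D) + 6*γ*t^2)) - ((6*γ + 1)/12)*t^4 := by
      rw [← h₁]; ring
    rw [hx, abs_le]
    set u := t^2/D with hudef
    clear_value D
    clear_value u
    clear hsdef harg
    have hE0 : (0:ℝ) < 2*(6 + t^2 + 12*γ*u + 6*γ*t^2) := by linarith
    have h4 : (0:ℝ) ≤ t^4 := by positivity
    have h6 : (0:ℝ) ≤ t^6 := by positivity
    have hd2 : ((6*γ + 1)/12)*t^4 - t^6 ≤ (1 + 6*γ)*t^4 / (2*(6 + t^2 + 12*γ*u + 6*γ*t^2)) := by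
      rw [le_div_iff₀ hE0]
      nlinarith [mul_nonneg (mul_nonneg (mul_nonneg (by linarith : (0:ℝ) ≤ 1/6 - γ)
          (by linarith : (0:ℝ) ≤ γ + 1/3)) hu0) h4,
        mul_nonneg (mul_nonneg (by linarith : (0:ℝ) ≤ 1 - 6*γ) (by linarith : (0:ℝ) ≤ 3 + 6*γ)) h6,
        mul_nonneg (sub_nonneg.2 hu1) h4,
        mul_nonneg (by linarith : (0:ℝ) ≤ 6 + t^2 + 12*γ*u + 6*γ*t^2 - 4) h6]
    have hd1 : (1 + 6*γ)*t^4 / (2*(6 + t^2 + 12*γ*u + 6*γ*t^2)) ≤ ((6*γ + 1)/12)*t^4 + t^6 := by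
      rw [div_le_iff₀ hE0]
      nlinarith [mul_nonneg (mul_nonneg (sq_nonneg (γ + 1/12)) hu0) h4,
        mul_nonneg (sub_nonneg.2 hu1) h4,
        mul_nonneg (sq_nonneg (6*γ+1)) h6,
        mul_nonneg (by linarith : (0:ℝ) ≤ 6 + t^2 + 12*γ*u + 6*γ*t^2 - 4) h6]
    constructor <;> linarith
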